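/- Let n ≥ 1 be an integer, F ≥ 0 a real number, and λ₁,…,λₙ positive real numbers with ∏_{i=1}^n λᵢ ≤ e^F. Then (∑_{i=1}^n 1/λᵢ)^{n−1} ≥ (n−1)! · e^{−F} · ∑_{i=1}^n λᵢ. -/

import Mathlib

open Finset

lemma powC (a b : ℝ) (ha : 0 ≤ a) (hb : 0 ≤ b) (m : ℕ) :
    b ^ (m + 1) + (m + 1 : ℝ) * a * b ^ m ≤ (a + b) ^ (m + 1) := by
  induction m with
  | zero => simp; nlinarith
  | succ m ih =>
    have hbm : (0 : ℝ) ≤ b ^ m := pow_nonneg hb m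
    have : (a + b) ^ (m + 2) = (a + b) * (a + b) ^ (m + 1) := by ring
    rw [this]
    have h1 : (a + b) * (b ^ (m + 1) + ((m : ℝ) + 1) * a * b ^ m) ≤
        (a + b) * (a + b) ^ (m + 1) :=
      mul_le_mul_of_nonneg_left ih (by linarith)
    have e1 : (a + b) * (b ^ (m + 1) + ((m : ℝ) + 1) * a * b ^ m) =
        b ^ (m + 2) + ((m : ℝ) + 2) * a * b ^ (m + 1) + ((m : ℝ) + 1) * a ^ 2 * b ^ m := by
      ring
    have e2 : (0 : ℝ) ≤ ((m : ℝ) + 1) * a ^ 2 * b ^ m := by positivity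
    push_cast
    have e3 : b ^ (m + 1 + 1) = b ^ (m + 2) := by ring
    rw [e3]
    linarith

lemma amgmA {ι : Type*} (s : Finset ι) (x : ι → ℝ) (hx : ∀ i ∈ s, 0 ≤ x i) :
    (s.card.factorial : ℝ) * ∏ i ∈ s, x i ≤ (∑ i ∈ s, x i) ^ s.card := by
  induction s using Finset.cons_induction with
  | empty => simp
  | cons a t h ih =>
    have hxa : 0 ≤ x a := hx a (mem_cons_self a t)
    have hxt : ∀ i ∈ t, 0 ≤ x i := fun i hi => hx i (mem_cons_of_mem hi)
    have hS : 0 ≤ ∑ i ∈ t, x i := Finset.sum_nonneg hxt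
    rw [Finset.sum_cons, Finset.prod_cons, Finset.card_cons]
    have hC := powC (x a) (∑ i ∈ t, x i) hxa hS t.card
    have ih' := ih hxt
    have hbm : (0 : ℝ) ≤ (∑ i ∈ t, x i) ^ (t.card + 1) := pow_nonneg hS _
    calc ((t.card + 1).factorial : ℝ) * (x a * ∏ i ∈ t, x i)
        = ((t.card : ℝ) + 1) * x a * ((t.card.factorial : ℝ) * ∏ i ∈ t, x i) := by
          push_cast [Nat.factorial_succ]; ring
      _ ≤ ((t.card : ℝ) + 1) * x a * (∑ i ∈ t, x i) ^ t.card := by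
          apply mul_le_mul_of_nonneg_left ih' (by positivity)
      _ ≤ (∑ i ∈ t, x i) ^ (t.card + 1) + ((t.card : ℝ) + 1) * x a * (∑ i ∈ t, x i) ^ t.card := by
          linarith
      _ ≤ (x a + ∑ i ∈ t, x i) ^ (t.card + 1) := hC

lemma keyB {ι : Type*} [DecidableEq ι] (s : Finset ι) (hs : s.Nonempty) (x : ι → ℝ)
    (hx : ∀ i ∈ s, 0 ≤ x i) :
    ((s.card - 1).factorial : ℝ) * ∑ j ∈ s, ∏ i ∈ s.erase j, x i ≤
      (∑ i ∈ s, x i) ^ (s.card - 1) := by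
  induction hs using Finset.Nonempty.cons_induction with
  | singleton a => simp
  | cons a t h ht ih =>
    have hxa : 0 ≤ x a := hx a (mem_cons_self a t)
    have hxt : ∀ i ∈ t, 0 ≤ x i := fun i hi => hx i (mem_cons_of_mem hi)
    have hS : 0 ≤ ∑ i ∈ t, x i := Finset.sum_nonneg hxt
    have hm : 1 ≤ t.card := Finset.card_pos.mpr ht
    rw [Finset.sum_cons, Finset.card_cons]
    simp only [Nat.add_sub_cancel]
    -- rewrite the sum over cons
    have herase : ∀ j ∈ t, ∏ i ∈ (t.cons a h).erase j, x i = x a * ∏ i ∈ t.erase j, x i := by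
      intro j hj
      have hja : j ≠ a := fun hja => h (hja ▸ hj)
      have : (t.cons a h).erase j = (t.erase j).cons a (fun ha => h (Finset.mem_of_mem_erase ha)) := by
        ext b
        simp only [Finset.mem_erase, Finset.mem_cons]
        constructor
        · rintro ⟨hb, hb' | hb'⟩
          · exact Or.inl hb'
          · exact Or.inr ⟨hb, hb'⟩
        · rintro (rfl | ⟨hb, hb'⟩)
          · exact ⟨hja.symm, Or.inl rfl⟩
          · exact ⟨hb, Or.inr hb'⟩
      rw [this, Finset.prod_cons]
    rw [Finset.sum_cons, Finset.erase_cons, Finset.sum_congr rfl herase, ← Finset.mul_sum]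
    have ihc := ih hxt
    have hfac : (t.card : ℝ) * ((t.card - 1).factorial : ℝ) = (t.card.factorial : ℝ) := by
      rw [← Nat.cast_mul, Nat.mul_factorial_pred (Nat.one_le_iff_ne_zero.mp hm)]
    have hA := amgmA t x hxt
    have hC := powC (x a) (∑ i ∈ t, x i) hxa hS (t.card - 1)
    rw [Nat.sub_add_cancel hm] at hC
    have h2 : x a * (((t.card - 1).factorial : ℝ) * ∑ j ∈ t, ∏ i ∈ t.erase j, x i) ≤
        x a * (∑ i ∈ t, x i) ^ (t.card - 1) := mul_le_mul_of_nonneg_left ihc hxa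
    have hcast : ((t.card - 1 : ℕ) : ℝ) + 1 = (t.card : ℝ) := by
      have := Nat.sub_add_cancel hm
      exact_mod_cast congrArg (Nat.cast : ℕ → ℝ) this
    rw [hcast] at hC
    calc ((t.card).factorial : ℝ) * (∏ i ∈ t, x i + x a * ∑ j ∈ t, ∏ i ∈ t.erase j, x i)
        = ((t.card).factorial : ℝ) * ∏ i ∈ t, x i +
          (t.card : ℝ) * x a * (((t.card - 1).factorial : ℝ) * ∑ j ∈ t, ∏ i ∈ t.erase j, x i) := by
          rw [← hfac]; ring
      _ ≤ (∑ i ∈ t, x i) ^ t.card + (t.card : ℝ) * x a * (∑ i ∈ t, x i) ^ (t.card - 1) := by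
          have h3 : (0:ℝ) ≤ (t.card : ℝ) * x a := by positivity
          have h4 := mul_le_mul_of_nonneg_left ihc h3
          linarith
      _ ≤ (x a + ∑ i ∈ t, x i) ^ t.card := hC

/-- if `∏ λᵢ ≤ e^F` then `(∑ 1/λᵢ)^(n-1) ≥ (n-1)! ⋅ e^{-F} ⋅ ∑ λᵢ`. -/
theorem stmt_2 (n : ℕ) (hn : 1 ≤ n) (F : ℝ) (hF : 0 ≤ F)
    (l : Fin n → ℝ) (hl : ∀ i, 0 < l i) (hprod : ∏ i, l i ≤ Real.exp F) :
    (∑ i, 1 / l i) ^ (n - 1) ≥ (Nat.factorial (n - 1) : ℝ) * Real.exp (-F) * (∑ i, l i) := by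
  have hP : 0 < ∏ i, l i := Finset.prod_pos (fun i _ => hl i)
  have hkey := keyB (Finset.univ : Finset (Fin n)) (Finset.univ_nonempty_iff.mpr
    ⟨⟨0, hn⟩⟩) (fun i => 1 / l i) (fun i _ => (one_div_pos.mpr (hl i)).le)
  simp only [Finset.card_univ, Fintype.card_fin] at hkey
  have hS : 0 < ∑ i, l i := Finset.sum_pos (fun i _ => hl i) (Finset.univ_nonempty_iff.mpr ⟨⟨0, hn⟩⟩)
  have hsum : ∑ j : Fin n, ∏ i ∈ Finset.univ.erase j, (1 / l i) = (∑ i, l i) / ∏ i, l i := by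
    rw [Finset.sum_div]
    apply Finset.sum_congr rfl
    intro j _
    have hme : (∏ i ∈ Finset.univ.erase j, l i) * l j = ∏ i, l i :=
      Finset.prod_erase_mul _ _ (Finset.mem_univ j)
    have hPe : 0 < ∏ i ∈ Finset.univ.erase j, l i :=
      Finset.prod_pos (fun i _ => hl i)
    have h1 : ∏ i ∈ Finset.univ.erase j, (1 / l i) = (∏ i ∈ Finset.univ.erase j, l i)⁻¹ := by
      simp [one_div]
    rw [h1, ← hme]
    field_simp
    exact (div_self (hl j).ne').symm
  rw [hsum] at hkey
  have hstep : Real.exp (-F) * (∑ i, l i) ≤ (∑ i, l i) / ∏ i, l i := by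
    rw [Real.exp_neg, div_eq_mul_inv, mul_comm (∑ i, l i)]
    exact mul_le_mul_of_nonneg_right (inv_anti₀ hP hprod) hS.le
  calc (Nat.factorial (n - 1) : ℝ) * Real.exp (-F) * (∑ i, l i)
      = (Nat.factorial (n - 1) : ℝ) * (Real.exp (-F) * (∑ i, l i)) := by ring
    _ ≤ (Nat.factorial (n - 1) : ℝ) * ((∑ i, l i) / ∏ i, l i) := by
        apply mul_le_mul_of_nonneg_left hstep (by positivity)
    _ ≤ (∑ i, 1 / l i) ^ (n - 1) := hkey
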